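/- If A = S·R_A, B = S·R_B, and R_A·S = R_B·S for matrices over the nonnegative integers, then for every positive integer n, B^(n+1) = A^n · B. -/
import Mathlib

/-- If A = S·R_A, B = S·R_B and R_A·S = R_B·S over ℕ, then B^(n+1) = A^n·B for
every positive integer n. -/
theorem balanced_elementary_equivalent_pow_right
    {d m : ℕ} (A B : Matrix (Fin d) (Fin d) ℕ)
    (S : Matrix (Fin d) (Fin m) ℕ) (RA RB : Matrix (Fin m) (Fin d) ℕ)
    (hA : A = S * RA) (hB : B = S * RB) (hbal : RA * S = RB * S) :
    ∀ n : ℕ, 0 < n → B ^ (n + 1) = A ^ n * B := by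
  have hB2 : B ^ 2 = A * B := by
    subst hA hB
    rw [pow_two, Matrix.mul_assoc, ← Matrix.mul_assoc RB S RB, ← hbal,
      Matrix.mul_assoc, ← Matrix.mul_assoc]
  intro n hn
  induction n with
  | zero => omega
  | succ k ih =>
    rcases Nat.eq_zero_or_pos k with hk | hk
    · subst hk; simpa [pow_two] using hB2
    · rw [pow_succ, ih hk, Matrix.mul_assoc, ← pow_two, hB2,
        ← Matrix.mul_assoc, ← pow_succ]
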